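/- In the Hecke algebra H_N(s) with S = T_1⋯T_{N−1}, the element S^N is central: T_j S^N = S^N T_j for all 1 ≤ j ≤ N−1. -/

import Mathlib

section Aux

variable {A : Type*} [Ring A]

private lemma comm_list (T : ℕ → A) (x : A) :
    ∀ (l : List ℕ), (∀ j ∈ l, x * T j = T j * x) →
      x * (l.map T).prod = (l.map T).prod * x := by
  intro l
  induction l with
  | nil => simp
  | cons a l ih =>
    intro h
    simp only [List.map_cons, List.prod_cons, ← mul_assoc]
    rw [h a (by simp), mul_assoc, ih (fun j hj => h j (by simp [hj])), ← mul_assoc]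

/-- `Dp N T k = T k * T (k+1) * ⋯ * T (N-1)`. -/
private def Dp (N : ℕ) (T : ℕ → A) (k : ℕ) : A := ((List.range' k (N - k)).map T).prod

private lemma Dp_stop (N : ℕ) (T : ℕ → A) (k : ℕ) (h : N ≤ k) : Dp N T k = 1 := by
  have : N - k = 0 := by omega
  simp [Dp, this]

private lemma Dp_succ (N : ℕ) (T : ℕ → A) (k : ℕ) (h : k < N) :
    Dp N T k = T k * Dp N T (k + 1) := by
  have h1 : N - k = (N - (k + 1)) + 1 := by omega
  rw [Dp, h1, List.range'_succ]
  simp [Dp]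

variable {N : ℕ} {T : ℕ → A}
variable (hcomm : ∀ i j, 1 ≤ i → j ≤ N - 1 → i + 1 < j → T i * T j = T j * T i)
variable (hbraid : ∀ i, 1 ≤ i → i + 1 ≤ N - 1 →
      T i * T (i + 1) * T i = T (i + 1) * T i * T (i + 1))

include hcomm in
private lemma Tcomm (i m : ℕ) (h1 : 1 ≤ i) (h2 : i + 1 < m) :
    T i * Dp N T m = Dp N T m * T i := by
  apply comm_list
  intro j hj
  rw [List.mem_range'_1] at hj
  exact hcomm i j h1 (by omega) (by omega)

include hcomm hbraid in
private lemma shift : ∀ d k, 1 ≤ k → k + d + 1 ≤ N - 1 →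
    Dp N T k * T (k + d) = T (k + d + 1) * Dp N T k := by
  intro d
  induction d with
  | zero =>
    intro k h1 h2
    simp only [Nat.add_zero]
    rw [Dp_succ N T k (by omega), Dp_succ N T (k + 1) (by omega)]
    have hc := Tcomm hcomm k (k + 2) h1 (by omega)
    have hb := hbraid k h1 (by omega)
    simp only [← mul_assoc]
    rw [mul_assoc (T k * T (k + 1)) _ (T k), ← hc, ← mul_assoc, hb]
  | succ d ih =>
    intro k h1 h2
    have e1 : k + (d + 1) = (k + 1) + d := by omega
    have e2 : k + (d + 1) + 1 = (k + 1) + d + 1 := by omega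
    rw [e2, e1, Dp_succ N T k (by omega), mul_assoc,
      ih (k + 1) (by omega) (by omega), ← mul_assoc,
      hcomm k ((k + 1) + d + 1) h1 (by omega) (by omega), mul_assoc]

include hcomm hbraid in
private lemma Bk : ∀ e k, 1 ≤ k → k + e = N - 1 →
    Dp N T (k + 1) * Dp N T k * T (N - 1) = T k * (Dp N T (k + 1) * Dp N T k) := by
  intro e
  induction e with
  | zero =>
    intro k h1 hk
    have hNk : N - 1 = k := by omega
    rw [Dp_stop N T (k + 1) (by omega), Dp_succ N T k (by omega),
      Dp_stop N T (k + 1) (by omega), hNk]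
    simp [mul_assoc]
  | succ e ih =>
    intro k h1 hk
    have f0 : Dp N T k = T k * Dp N T (k + 1) := Dp_succ N T k (by omega)
    have f1 : Dp N T (k + 1) = T (k + 1) * Dp N T (k + 2) := Dp_succ N T (k + 1) (by omega)
    have fc : T k * Dp N T (k + 2) = Dp N T (k + 2) * T k := Tcomm hcomm k (k + 2) h1 (by omega)
    have fb := hbraid k h1 (by omega)
    have ih' := ih (k + 1) (by omega) (by omega)
    calc Dp N T (k + 1) * Dp N T k * T (N - 1)
        = (T (k + 1) * (Dp N T (k + 2) * T k)) * Dp N T (k + 1) * T (N - 1) := by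
          rw [f0, ← mul_assoc, mul_assoc (Dp N T (k+1)) (T k), ← mul_assoc (Dp N T (k+1)),
            f1, mul_assoc (T (k+1))]
      _ = T (k + 1) * (T k * (Dp N T (k + 2) * Dp N T (k + 1) * T (N - 1))) := by
          rw [← fc]; simp only [mul_assoc]
      _ = T (k + 1) * (T k * (T (k + 1) * (Dp N T (k + 2) * Dp N T (k + 1)))) := by
          rw [ih']
      _ = T k * T (k + 1) * T k * (Dp N T (k + 2) * Dp N T (k + 1)) := by
          simp only [← mul_assoc]; rw [fb]
      _ = T k * (T (k + 1) * ((T k * Dp N T (k + 2)) * Dp N T (k + 1))) := by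
          simp only [mul_assoc]
      _ = T k * (Dp N T (k + 1) * Dp N T k) := by
          rw [fc, f0, f1]; simp only [mul_assoc]

end Aux

/-- in the Hecke algebra `H_N(s)` with `S = T_1 ⋯ T_{N−1}`, the element
`S^N` is central: `T_j S^N = S^N T_j` for all `1 ≤ j ≤ N−1`. -/
theorem SN_central {K A : Type*} [Field K] [Ring A] [Algebra K A] (N : ℕ) (s : K)
    (T : ℕ → A)
    (hquad : ∀ i, 1 ≤ i → i ≤ N - 1 → (T i - algebraMap K A s) * (T i + 1) = 0)
    (hbraid : ∀ i, 1 ≤ i → i + 1 ≤ N - 1 →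
      T i * T (i + 1) * T i = T (i + 1) * T i * T (i + 1))
    (hcomm : ∀ i j, 1 ≤ i → j ≤ N - 1 → i + 1 < j → T i * T j = T j * T i)
    (j : ℕ) (h1 : 1 ≤ j) (hN : j ≤ N - 1) :
    T j * (((List.range (N - 1)).map (fun k => T (k + 1))).prod) ^ N
      = (((List.range (N - 1)).map (fun k => T (k + 1))).prod) ^ N * T j := by
  have hN2 : 2 ≤ N := by omega
  -- identify S with Dp N T 1
  have hS : ((List.range (N - 1)).map (fun k => T (k + 1))).prod = Dp N T 1 := by
    rw [Dp, List.range_eq_range' , ← List.map_add_range' (a := 1) 0 (N - 1) 1, List.map_map]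
    congr 1
    ext k
    simp [Nat.add_comm]
  rw [hS]
  set c := Dp N T 1 with hc
  -- shift in power form, left
  have L1 : ∀ m, 1 + m ≤ N - 1 → T (1 + m) * c ^ m = c ^ m * T 1 := by
    intro m
    induction m with
    | zero => simp
    | succ m ih =>
      intro hm
      have hsh : c * T (1 + m) = T (1 + m + 1) * c := by
        have := shift hcomm hbraid m 1 le_rfl (by omega)
        simpa using this
      have : (1 : ℕ) + (m + 1) = 1 + m + 1 := by omega
      rw [this, pow_succ' c (m), ← mul_assoc, ← hsh, mul_assoc, ih (by omega), ← mul_assoc,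
        ← pow_succ']
  -- shift in power form, right
  have L2 : ∀ m i, 1 ≤ i → i + m ≤ N - 1 → c ^ m * T i = T (i + m) * c ^ m := by
    intro m
    induction m with
    | zero => intro i _ _; simp
    | succ m ih =>
      intro i hi him
      have hsh : c * T i = T (i + 1) * c := by
        have hst := shift hcomm hbraid (i - 1) 1 le_rfl (by omega)
        have e' : 1 + (i - 1) = i := by omega
        rw [e'] at hst
        rw [hc]
        exact hst
      have e : i + (m + 1) = (i + 1) + m := by omega
      rw [e, pow_succ c m, mul_assoc, hsh, ← mul_assoc,
        ih (i + 1) (by omega) (by omega), mul_assoc]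
  -- the key extra identity: c² T_{N-1} = T_1 c²
  have K2 : c * c * T (N - 1) = T 1 * (c * c) := by
    have hB := Bk hcomm hbraid (N - 2) 1 le_rfl (by omega)
    have f : Dp N T 1 = T 1 * Dp N T (1 + 1) := Dp_succ N T 1 (by omega)
    rw [hc]
    calc Dp N T 1 * Dp N T 1 * T (N - 1)
        = T 1 * (Dp N T (1 + 1) * Dp N T 1 * T (N - 1)) := by
          conv_lhs => lhs; lhs; rw [f]
          simp only [mul_assoc]
      _ = T 1 * (T 1 * (Dp N T (1 + 1) * Dp N T 1)) := by rw [hB]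
      _ = T 1 * (Dp N T 1 * Dp N T 1) := by
          conv_rhs => rhs; lhs; rw [f]
          simp only [mul_assoc]
  -- assemble
  have hNsplit : N = (j - 1) + 2 + (N - 1 - j) := by omega
  have hpow : c ^ N = c ^ (j - 1) * (c * c) * c ^ (N - 1 - j) := by
    conv_lhs => rw [hNsplit]
    rw [pow_add, pow_add, pow_two]
  have l1 := L1 (j - 1) (by omega)
  have ej : (1 : ℕ) + (j - 1) = j := by omega
  rw [ej] at l1
  have l2 := L2 (N - 1 - j) j h1 (by omega)
  have ej2 : j + (N - 1 - j) = N - 1 := by omega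
  rw [ej2] at l2
  rw [hpow]
  conv_lhs => rw [← mul_assoc, ← mul_assoc, l1, mul_assoc (c ^ (j - 1)) (T 1) (c * c)]
  conv_rhs => rw [mul_assoc, l2, ← mul_assoc, mul_assoc (c ^ (j - 1)) (c * c) (T (N - 1)),
    K2]
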